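/- The point D1 = (1−d, 2(1−d)) lies on the elliptic curve C, the point (0,0) lies on C, doubling gives 2·D1 = (0,0) and 2·(0,0) = O (the identity), and (0,0) ≠ O; hence D1 is a point of exact order 4 and (0,0) is a point of exact order 2 in the group of points of C. -/

import Mathlib

open WeierstrassCurve
open scoped Classical

/-- The elliptic curve `C : y² = x(x² + 2(1+d)x + (1−d)²)` in Weierstrass form. -/
def edwardsWeierstrass {K : Type*} [Field K] (d : K) : WeierstrassCurve.Affine K :=
  { a₁ := 0, a₂ := 2 * (1 + d), a₃ := 0, a₄ := (1 - d) ^ 2, a₆ := 0 }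

private lemma some_eq_some_aux {K : Type*} [Field K] {W : WeierstrassCurve.Affine K}
    {x₁ y₁ x₂ y₂ : K} (hx : x₁ = x₂) (hy : y₁ = y₂) (h₁ : W.Nonsingular x₁ y₁)
    (h₂ : W.Nonsingular x₂ y₂) :
    Affine.Point.some _ _ h₁ = Affine.Point.some _ _ h₂ := by
  subst hx; subst hy; rfl

/-- `D1 = (1−d, 2(1−d))` and `(0,0)` lie on the curve `C`,
`2·D1 = (0,0)`, `2·(0,0) = O` and `(0,0) ≠ O`; hence `D1` has exact order `4` and
`(0,0)` has exact order `2`. -/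
theorem stmt_9 {K : Type*} [Field K] (hchar : (2 : K) ≠ 0) (d : K)
    (hd0 : d ≠ 0) (hd1 : d ≠ 1) :
    ∃ (hD1 : (edwardsWeierstrass d).Nonsingular (1 - d) (2 * (1 - d)))
      (hE1 : (edwardsWeierstrass d).Nonsingular 0 0),
      2 • (Affine.Point.some _ _ hD1) = Affine.Point.some _ _ hE1 ∧
      2 • (Affine.Point.some _ _ hE1) = (0 : (edwardsWeierstrass d).Point) ∧
      Affine.Point.some _ _ hE1 ≠ (0 : (edwardsWeierstrass d).Point) ∧
      addOrderOf (Affine.Point.some _ _ hD1) = 4 ∧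
      addOrderOf (Affine.Point.some _ _ hE1) = 2 := by
  have h1d : (1 : K) - d ≠ 0 := sub_ne_zero.mpr (Ne.symm hd1)
  have hD1 : (edwardsWeierstrass d).Nonsingular (1 - d) (2 * (1 - d)) := by
    rw [Affine.nonsingular_iff', Affine.equation_iff]
    refine ⟨by simp [edwardsWeierstrass]; ring, Or.inr ?_⟩
    simp only [edwardsWeierstrass, mul_zero, add_zero, zero_mul]
    intro h
    exact mul_ne_zero (mul_ne_zero hchar hchar) h1d (by linear_combination h)
  have hE1 : (edwardsWeierstrass d).Nonsingular 0 0 := by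
    rw [Affine.nonsingular_iff', Affine.equation_iff]
    refine ⟨by simp [edwardsWeierstrass], Or.inl ?_⟩
    simp only [edwardsWeierstrass, mul_zero, zero_mul, zero_pow, ne_eq]
    intro h
    exact pow_ne_zero 2 h1d (by linear_combination -h)
  refine ⟨hD1, hE1, ?_⟩
  have hnegY : (edwardsWeierstrass d).toAffine.negY (1 - d) (2 * (1 - d)) = -(2 * (1 - d)) := by
    simp [edwardsWeierstrass, Affine.negY]
  have hYne : 2 * (1 - d) ≠ (edwardsWeierstrass d).toAffine.negY (1 - d) (2 * (1 - d)) := by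
    rw [hnegY]
    intro h
    exact mul_ne_zero (mul_ne_zero hchar hchar) h1d (by linear_combination h)
  have hden : (2 : K) * (1 - d) - -(2 * (1 - d)) ≠ 0 := by
    intro h
    exact mul_ne_zero (mul_ne_zero hchar hchar) h1d (by linear_combination h)
  have hslope : (edwardsWeierstrass d).toAffine.slope (1 - d) (1 - d) (2 * (1 - d)) (2 * (1 - d))
      = 2 := by
    rw [Affine.slope_of_Y_ne rfl hYne, hnegY]
    simp only [edwardsWeierstrass]
    rw [div_eq_iff hden]
    ring
  have hdbl : 2 • (Affine.Point.some _ _ hD1) = Affine.Point.some _ _ hE1 := by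
    rw [two_smul, Affine.Point.add_self_of_Y_ne hYne]
    apply some_eq_some_aux
    · rw [hslope]; simp [edwardsWeierstrass]; ring
    · rw [hslope]; simp [edwardsWeierstrass, Affine.negY, Affine.addY, Affine.negAddY, Affine.addX]; ring
  have hdbl2 : 2 • (Affine.Point.some _ _ hE1) = (0 : (edwardsWeierstrass d).Point) := by
    rw [two_smul, Affine.Point.add_self_of_Y_eq (by simp [edwardsWeierstrass, Affine.negY])]
  have hE1ne : Affine.Point.some _ _ hE1 ≠ (0 : (edwardsWeierstrass d).Point) :=
    Affine.Point.some_ne_zero hE1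
  refine ⟨hdbl, hdbl2, hE1ne, ?_, ?_⟩
  · have : Fact (Nat.Prime 2) := ⟨Nat.prime_two⟩
    have h4 : (2 : ℕ) ^ 2 • (Affine.Point.some _ _ hD1) = 0 := by
      rw [pow_succ, pow_one, mul_smul, hdbl, hdbl2]
    have h2 : ¬ (2 : ℕ) ^ 1 • (Affine.Point.some _ _ hD1) = 0 := by
      rw [pow_one, hdbl]; exact hE1ne
    simpa using addOrderOf_eq_prime_pow h2 h4
  · have : Fact (Nat.Prime 2) := ⟨Nat.prime_two⟩
    exact addOrderOf_eq_prime hdbl2 hE1ne
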